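/- (Equivalence form of Lemma 3.) Let u_max > 0 and α ≥ 1 be real constants, e₁ = (1,0), e₂ = (0,1). Let r, ṙ, d, ḋ ∈ ℝ² with r ≠ 0 and d ≠ 0, and set r̂ = r/‖r‖, d̂ = d/‖d‖. Then there exists u ∈ ℝ² satisfying ‖u‖_∞ ≤ u_max, ⟪u, e₁⟫ ≤ −u_max/α, ⟪u, e₂⟫ ≤ −u_max/α, (‖ṙ‖/u_max) · ⟪u, r̂⟫ + ⟪ṙ, r̂⟫ ≤ 0, and −(‖ḋ‖/u_max) · ⟪u, d̂⟫ − ⟪ḋ, d̂⟫ ≤ 0, if and only if there exists a pair (x, y) with 1/α ≤ x ≤ 1, 1/α ≤ y ≤ 1, ‖ṙ‖ · (x · ⟪e₁, r̂⟫ + y · ⟪e₂, r̂⟫) ≥ ⟪ṙ, r̂⟫, and ‖ḋ‖ · (x · ⟪e₁, d̂⟫ + y · ⟪e₂, d̂⟫) ≤ ⟪ḋ, d̂⟫; moreover, any such pair (x, y) yields a feasible control u = −x·u_max·e₁ − y·u_max·e₂. -/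

import Mathlib

open scoped RealInnerProductSpace

noncomputable def e1 : EuclideanSpace ℝ (Fin 2) := EuclideanSpace.single 0 1
noncomputable def e2 : EuclideanSpace ℝ (Fin 2) := EuclideanSpace.single 1 1

/-- Infinity norm on ℝ²: `‖u‖_∞ = max (|⟪u, e₁⟫|) (|⟪u, e₂⟫|)`. -/
noncomputable def infNorm (u : EuclideanSpace ℝ (Fin 2)) : ℝ :=
  max |⟪u, e1⟫| |⟪u, e2⟫|

lemma inner_expand (u v : EuclideanSpace ℝ (Fin 2)) : ⟪u, v⟫ = u 0 * v 0 + u 1 * v 1 := by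
  simp [PiLp.inner_apply, Fin.sum_univ_two, RCLike.inner_apply]; ring

lemma e1_0 : (e1 : EuclideanSpace ℝ (Fin 2)) 0 = 1 := by simp [e1, EuclideanSpace.single_apply]
lemma e1_1 : (e1 : EuclideanSpace ℝ (Fin 2)) 1 = 0 := by simp [e1, EuclideanSpace.single_apply]
lemma e2_0 : (e2 : EuclideanSpace ℝ (Fin 2)) 0 = 0 := by simp [e2, EuclideanSpace.single_apply]
lemma e2_1 : (e2 : EuclideanSpace ℝ (Fin 2)) 1 = 1 := by simp [e2, EuclideanSpace.single_apply]

lemma key (umax α : ℝ) (humax : 0 < umax) (hα : 1 ≤ α)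
    (rdot ddot rh dh : EuclideanSpace ℝ (Fin 2))
    (x y : ℝ) (hx1 : 1 / α ≤ x) (hx2 : x ≤ 1) (hy1 : 1 / α ≤ y) (hy2 : y ≤ 1)
    (hs : ‖rdot‖ * (x * ⟪e1, rh⟫ + y * ⟪e2, rh⟫) ≥ ⟪rdot, rh⟫)
    (hp : ‖ddot‖ * (x * ⟪e1, dh⟫ + y * ⟪e2, dh⟫) ≤ ⟪ddot, dh⟫) :
    (infNorm (-(x * umax) • e1 - (y * umax) • e2) ≤ umax ∧
     ⟪(-(x * umax) • e1 - (y * umax) • e2 : EuclideanSpace ℝ (Fin 2)), e1⟫ ≤ -(umax / α) ∧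
     ⟪(-(x * umax) • e1 - (y * umax) • e2 : EuclideanSpace ℝ (Fin 2)), e2⟫ ≤ -(umax / α) ∧
     (‖rdot‖ / umax) *
         ⟪(-(x * umax) • e1 - (y * umax) • e2 : EuclideanSpace ℝ (Fin 2)), rh⟫ + ⟪rdot, rh⟫ ≤ 0 ∧
     -((‖ddot‖ / umax) *
         ⟪(-(x * umax) • e1 - (y * umax) • e2 : EuclideanSpace ℝ (Fin 2)), dh⟫) - ⟪ddot, dh⟫ ≤ 0) := by
  have hα0 : (0:ℝ) < α := lt_of_lt_of_le one_pos hα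
  have hx0 : 0 < x := lt_of_lt_of_le (by positivity) hx1
  have hy0 : 0 < y := lt_of_lt_of_le (by positivity) hy1
  have hxa : 1 ≤ x * α := by rw [div_le_iff₀ hα0] at hx1; linarith
  have hya : 1 ≤ y * α := by rw [div_le_iff₀ hα0] at hy1; linarith
  simp only [inner_expand, e1_0, e1_1, e2_0, e2_1, mul_one, mul_zero, zero_mul, one_mul,
    add_zero, zero_add, PiLp.sub_apply, PiLp.smul_apply, smul_eq_mul] at hs hp ⊢
  refine ⟨?_, ?_, ?_, ?_, ?_⟩
  · have h1 : |⟪(-(x * umax) • e1 - (y * umax) • e2 : EuclideanSpace ℝ (Fin 2)), e1⟫| = x * umax := by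
      simp only [inner_expand, e1_0, e1_1, e2_0, e2_1, mul_one, mul_zero, add_zero,
        PiLp.sub_apply, PiLp.smul_apply, smul_eq_mul]
      rw [show -(x * umax) - 0 = -(x * umax) by ring, abs_neg,
        abs_of_nonneg (by positivity)]
    have h2 : |⟪(-(x * umax) • e1 - (y * umax) • e2 : EuclideanSpace ℝ (Fin 2)), e2⟫| = y * umax := by
      simp only [inner_expand, e1_0, e1_1, e2_0, e2_1, mul_one, mul_zero, zero_add,
        PiLp.sub_apply, PiLp.smul_apply, smul_eq_mul]
      rw [show (0:ℝ) - y * umax = -(y * umax) by ring, abs_neg,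
        abs_of_nonneg (by positivity)]
    rw [infNorm, h1, h2]
    exact max_le (by nlinarith) (by nlinarith)
  · rw [div_le_iff₀ hα0] at hx1
    have : umax / α ≤ x * umax := by rw [div_le_iff₀ hα0]; nlinarith
    nlinarith
  · have : umax / α ≤ y * umax := by rw [div_le_iff₀ hα0]; nlinarith
    nlinarith
  · have hkey : ‖rdot‖ / umax * ((-(x * umax) - 0) * rh 0 +
        ((0:ℝ) - y * umax) * rh 1)
        = -(‖rdot‖ * (x * rh 0 + y * rh 1)) := by
      field_simp
      ring
    rw [hkey]; linarith
  · have hkey : ‖ddot‖ / umax * ((-(x * umax) - 0) * dh 0 +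
        ((0:ℝ) - y * umax) * dh 1)
        = -(‖ddot‖ * (x * dh 0 + y * dh 1)) := by
      field_simp
      ring
    rw [hkey]; linarith

theorem stmt_13 (umax α : ℝ) (humax : 0 < umax) (hα : 1 ≤ α)
    (r rdot d ddot : EuclideanSpace ℝ (Fin 2)) (hr : r ≠ 0) (hd : d ≠ 0) :
    ((∃ u : EuclideanSpace ℝ (Fin 2),
        infNorm u ≤ umax ∧
        ⟪u, e1⟫ ≤ -(umax / α) ∧
        ⟪u, e2⟫ ≤ -(umax / α) ∧
        (‖rdot‖ / umax) * ⟪u, ‖r‖⁻¹ • r⟫ + ⟪rdot, ‖r‖⁻¹ • r⟫ ≤ 0 ∧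
        -((‖ddot‖ / umax) * ⟪u, ‖d‖⁻¹ • d⟫) - ⟪ddot, ‖d‖⁻¹ • d⟫ ≤ 0) ↔
      (∃ x y : ℝ, 1 / α ≤ x ∧ x ≤ 1 ∧ 1 / α ≤ y ∧ y ≤ 1 ∧
        ‖rdot‖ * (x * ⟪e1, ‖r‖⁻¹ • r⟫ + y * ⟪e2, ‖r‖⁻¹ • r⟫)
          ≥ ⟪rdot, ‖r‖⁻¹ • r⟫ ∧
        ‖ddot‖ * (x * ⟪e1, ‖d‖⁻¹ • d⟫ + y * ⟪e2, ‖d‖⁻¹ • d⟫)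
          ≤ ⟪ddot, ‖d‖⁻¹ • d⟫)) ∧
    (∀ x y : ℝ, 1 / α ≤ x → x ≤ 1 → 1 / α ≤ y → y ≤ 1 →
      ‖rdot‖ * (x * ⟪e1, ‖r‖⁻¹ • r⟫ + y * ⟪e2, ‖r‖⁻¹ • r⟫)
        ≥ ⟪rdot, ‖r‖⁻¹ • r⟫ →
      ‖ddot‖ * (x * ⟪e1, ‖d‖⁻¹ • d⟫ + y * ⟪e2, ‖d‖⁻¹ • d⟫)
        ≤ ⟪ddot, ‖d‖⁻¹ • d⟫ →
      (infNorm (-(x * umax) • e1 - (y * umax) • e2) ≤ umax ∧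
       ⟪(-(x * umax) • e1 - (y * umax) • e2 : EuclideanSpace ℝ (Fin 2)), e1⟫
         ≤ -(umax / α) ∧
       ⟪(-(x * umax) • e1 - (y * umax) • e2 : EuclideanSpace ℝ (Fin 2)), e2⟫
         ≤ -(umax / α) ∧
       (‖rdot‖ / umax) *
           ⟪(-(x * umax) • e1 - (y * umax) • e2 : EuclideanSpace ℝ (Fin 2)),
             ‖r‖⁻¹ • r⟫ + ⟪rdot, ‖r‖⁻¹ • r⟫ ≤ 0 ∧
       -((‖ddot‖ / umax) *
           ⟪(-(x * umax) • e1 - (y * umax) • e2 : EuclideanSpace ℝ (Fin 2)),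
             ‖d‖⁻¹ • d⟫) - ⟪ddot, ‖d‖⁻¹ • d⟫ ≤ 0)) := by
  have hα0 : (0:ℝ) < α := lt_of_lt_of_le one_pos hα
  constructor
  · constructor
    · rintro ⟨u, hbnd, hw1, hw2, hsw, hpr⟩
      refine ⟨-(u 0) / umax, -(u 1) / umax, ?_, ?_, ?_, ?_, ?_, ?_⟩
      · rw [div_le_div_iff₀ hα0 humax]
        have := hw1; rw [inner_expand, e1_0, e1_1] at this
        have h2 : umax / α ≤ -(u 0) := by linarith
        rw [div_le_iff₀ hα0] at h2
        nlinarith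
      · rw [div_le_one humax]
        have h1 : |⟪u, e1⟫| ≤ umax := le_trans (le_max_left _ _) hbnd
        rw [inner_expand, e1_0, e1_1] at h1
        have := abs_le.mp (by simpa using h1)
        linarith [this.1]
      · rw [div_le_div_iff₀ hα0 humax]
        have := hw2; rw [inner_expand, e2_0, e2_1] at this
        have h2 : umax / α ≤ -(u 1) := by linarith
        rw [div_le_iff₀ hα0] at h2
        nlinarith
      · rw [div_le_one humax]
        have h1 : |⟪u, e2⟫| ≤ umax := le_trans (le_max_right _ _) hbnd
        rw [inner_expand, e2_0, e2_1] at h1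
        have := abs_le.mp (by simpa using h1)
        linarith [this.1]
      · rw [inner_expand u, inner_expand rdot] at hsw
        rw [inner_expand rdot, inner_expand e1, inner_expand e2, e1_0, e1_1, e2_0, e2_1]
        have hkey : ‖rdot‖ * (-(u 0) / umax * (1 * (‖r‖⁻¹ • r : EuclideanSpace ℝ (Fin 2)) 0 +
              0 * (‖r‖⁻¹ • r : EuclideanSpace ℝ (Fin 2)) 1) +
            -(u 1) / umax * (0 * (‖r‖⁻¹ • r : EuclideanSpace ℝ (Fin 2)) 0 +
              1 * (‖r‖⁻¹ • r : EuclideanSpace ℝ (Fin 2)) 1))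
            = -(‖rdot‖ / umax * (u 0 * (‖r‖⁻¹ • r : EuclideanSpace ℝ (Fin 2)) 0 +
              u 1 * (‖r‖⁻¹ • r : EuclideanSpace ℝ (Fin 2)) 1)) := by
          field_simp; ring
        rw [ge_iff_le, hkey]
        linarith
      · rw [inner_expand u, inner_expand ddot] at hpr
        rw [inner_expand ddot, inner_expand e1, inner_expand e2, e1_0, e1_1, e2_0, e2_1]
        have hkey : ‖ddot‖ * (-(u 0) / umax * (1 * (‖d‖⁻¹ • d : EuclideanSpace ℝ (Fin 2)) 0 +
              0 * (‖d‖⁻¹ • d : EuclideanSpace ℝ (Fin 2)) 1) +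
            -(u 1) / umax * (0 * (‖d‖⁻¹ • d : EuclideanSpace ℝ (Fin 2)) 0 +
              1 * (‖d‖⁻¹ • d : EuclideanSpace ℝ (Fin 2)) 1))
            = -(‖ddot‖ / umax * (u 0 * (‖d‖⁻¹ • d : EuclideanSpace ℝ (Fin 2)) 0 +
              u 1 * (‖d‖⁻¹ • d : EuclideanSpace ℝ (Fin 2)) 1)) := by
          field_simp; ring
        rw [hkey]
        linarith
    · rintro ⟨x, y, hx1, hx2, hy1, hy2, hs, hp⟩
      exact ⟨_, key umax α humax hα rdot ddot _ _ x y hx1 hx2 hy1 hy2 hs hp⟩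
  · intro x y hx1 hx2 hy1 hy2 hs hp
    exact key umax α humax hα rdot ddot _ _ x y hx1 hx2 hy1 hy2 hs hp
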